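/- Let G be an abelian group, A, B ⊆ G finite sets with |A| = |B| = N, and Γ ⊆ A × B with |Γ| ≥ (1-δ)N² for some 0 < δ < 1/4. If |A +_Γ B| ≤ KN for some K ≥ 1, then there exist subsets A' ⊆ A and B' ⊆ B with |A'| ≥ (1-δ^{1/2})N, |B'| ≥ (1-δ^{1/2})N, and |A' + B'| ≤ K³N/(1-2δ^{1/2})². -/

import Mathlib

open Finset Pointwise

set_option maxHeartbeats 1000000

theorem stmt_0 {G : Type*} [AddCommGroup G] [DecidableEq G]
    (A B : Finset G) (N : ℕ) (hA : A.card = N) (hB : B.card = N)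
    (δ K : ℝ) (hδ0 : 0 < δ) (hδ : δ < 1/4) (hK : 1 ≤ K)
    (Γ : Finset (G × G)) (hΓAB : Γ ⊆ A ×ˢ B)
    (hΓcard : (1 - δ) * (N : ℝ) ^ 2 ≤ Γ.card)
    (hsum : ((Γ.image fun p => p.1 + p.2).card : ℝ) ≤ K * N) :
    ∃ A' ⊆ A, ∃ B' ⊆ B,
      (1 - Real.sqrt δ) * N ≤ (A'.card : ℝ) ∧
      (1 - Real.sqrt δ) * N ≤ (B'.card : ℝ) ∧
      ((A' + B').card : ℝ) ≤ K ^ 3 * N / (1 - 2 * Real.sqrt δ) ^ 2 := by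
  classical
  obtain rfl | hN := Nat.eq_zero_or_pos N
  · refine ⟨∅, by simp, ∅, by simp, by simp, by simp, ?_⟩
    have h0 : (1 : ℝ) - 2 * Real.sqrt δ ≠ 0 ∨ True := Or.inr trivial
    simp
  set s := Real.sqrt δ with hs
  have hs0 : 0 < s := Real.sqrt_pos.2 hδ0
  have hss : s * s = δ := Real.mul_self_sqrt hδ0.le
  have hs2 : s < 1/2 := by
    nlinarith [hss, hs0]
  have hNR : (0:ℝ) < N := by exact_mod_cast hN
  set degA : G → ℕ := fun a => (B.filter fun b => (a, b) ∈ Γ).card with hdegA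
  set degB : G → ℕ := fun b => (A.filter fun a => (a, b) ∈ Γ).card with hdegB
  set A' := A.filter (fun a => (1 - s) * N ≤ (degA a : ℝ)) with hA'
  set B' := B.filter (fun b => (1 - s) * N ≤ (degB b : ℝ)) with hB'
  -- fiber identities
  have fibA : ∀ a, (Γ.filter fun p => p.1 = a).card = degA a := by
    intro a
    simp only [hdegA]
    rw [show (B.filter fun b => (a, b) ∈ Γ) = (Γ.filter fun p => p.1 = a).image Prod.snd by
      ext b
      simp only [mem_image, mem_filter]
      constructor
      · rintro ⟨hb, hab⟩; exact ⟨(a, b), ⟨hab, rfl⟩, rfl⟩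
      · rintro ⟨p, ⟨hp, hp1⟩, hp2⟩
        subst hp1; subst hp2
        exact ⟨(mem_product.1 (hΓAB hp)).2, hp⟩]
    rw [card_image_of_injOn]
    intro p hp q hq h
    simp only [mem_coe, mem_filter] at hp hq
    exact Prod.ext (hp.2.trans hq.2.symm) h
  have fibB : ∀ b, (Γ.filter fun p => p.2 = b).card = degB b := by
    intro b
    simp only [hdegB]
    rw [show (A.filter fun a => (a, b) ∈ Γ) = (Γ.filter fun p => p.2 = b).image Prod.fst by
      ext a
      simp only [mem_image, mem_filter]
      constructor
      · rintro ⟨ha, hab⟩; exact ⟨(a, b), ⟨hab, rfl⟩, rfl⟩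
      · rintro ⟨p, ⟨hp, hp2⟩, hp1⟩
        subst hp2; subst hp1
        exact ⟨(mem_product.1 (hΓAB hp)).1, hp⟩]
    rw [card_image_of_injOn]
    intro p hp q hq h
    simp only [mem_coe, mem_filter] at hp hq
    exact Prod.ext h (hp.2.trans hq.2.symm)
  have degA_le : ∀ a, (degA a : ℝ) ≤ N := by
    intro a
    have := card_filter_le B (fun b => (a, b) ∈ Γ)
    rw [hB] at this
    exact_mod_cast this
  have degB_le : ∀ b, (degB b : ℝ) ≤ N := by
    intro b
    have := card_filter_le A (fun a => (a, b) ∈ Γ)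
    rw [hA] at this
    exact_mod_cast this
  -- card bounds for A', B'
  have sumA : ∑ a ∈ A, (degA a : ℝ) = Γ.card := by
    have h := card_eq_sum_card_fiberwise (f := Prod.fst) (s := Γ) (t := A)
      (fun p hp => (mem_product.1 (hΓAB hp)).1)
    rw [h]
    push_cast
    exact Finset.sum_congr rfl fun a _ => by rw [fibA a]
  have sumB : ∑ b ∈ B, (degB b : ℝ) = Γ.card := by
    have h := card_eq_sum_card_fiberwise (f := Prod.snd) (s := Γ) (t := B)
      (fun p hp => (mem_product.1 (hΓAB hp)).2)
    rw [h]
    push_cast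
    exact Finset.sum_congr rfl fun b _ => by rw [fibB b]
  have cardA' : (1 - s) * N ≤ (A'.card : ℝ) := by
    have hsplit : ∑ a ∈ A, (degA a : ℝ) =
        ∑ a ∈ A', (degA a : ℝ) + ∑ a ∈ A \ A', (degA a : ℝ) := by
      rw [add_comm, Finset.sum_sdiff (filter_subset _ _)]
    have h1 : ∑ a ∈ A', (degA a : ℝ) ≤ A'.card * N := by
      have := Finset.sum_le_card_nsmul A' (fun a => (degA a : ℝ)) ((N:ℝ)) (fun a _ => degA_le a)
      simpa [nsmul_eq_mul] using this
    have h2 : ∑ a ∈ A \ A', (degA a : ℝ) ≤ ((A \ A').card : ℝ) * ((1 - s) * N) := by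
      have := Finset.sum_le_card_nsmul (A \ A') (fun a => (degA a : ℝ)) ((1 - s) * N)
        (fun a ha => by
          have h := (mem_sdiff.1 ha).2
          rw [hA', mem_filter] at h
          push_neg at h
          exact le_of_lt (h (mem_sdiff.1 ha).1))
      simpa [nsmul_eq_mul] using this
    have hcards : ((A \ A').card : ℝ) = N - A'.card := by
      rw [card_sdiff_of_subset (filter_subset _ _), hA]
      have : A'.card ≤ N := by rw [← hA]; exact card_le_card (filter_subset _ _)
      rw [Nat.cast_sub this]
    have hΓA : (1 - δ) * (N:ℝ)^2 ≤ A'.card * N + (N - A'.card) * ((1 - s) * N) := by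
      calc (1 - δ) * (N:ℝ)^2 ≤ Γ.card := hΓcard
        _ = ∑ a ∈ A, (degA a : ℝ) := sumA.symm
        _ = ∑ a ∈ A', (degA a : ℝ) + ∑ a ∈ A \ A', (degA a : ℝ) := hsplit
        _ ≤ A'.card * N + (N - A'.card) * ((1 - s) * N) := by
            rw [← hcards]; exact add_le_add h1 h2
    nlinarith [hΓA, hss, hs0, hNR, mul_pos hs0 hNR]
  have cardB' : (1 - s) * N ≤ (B'.card : ℝ) := by
    have hsplit : ∑ b ∈ B, (degB b : ℝ) =
        ∑ b ∈ B', (degB b : ℝ) + ∑ b ∈ B \ B', (degB b : ℝ) := by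
      rw [add_comm, Finset.sum_sdiff (filter_subset _ _)]
    have h1 : ∑ b ∈ B', (degB b : ℝ) ≤ B'.card * N := by
      have := Finset.sum_le_card_nsmul B' (fun b => (degB b : ℝ)) ((N:ℝ)) (fun b _ => degB_le b)
      simpa [nsmul_eq_mul] using this
    have h2 : ∑ b ∈ B \ B', (degB b : ℝ) ≤ ((B \ B').card : ℝ) * ((1 - s) * N) := by
      have := Finset.sum_le_card_nsmul (B \ B') (fun b => (degB b : ℝ)) ((1 - s) * N)
        (fun b hb => by
          have h := (mem_sdiff.1 hb).2
          rw [hB', mem_filter] at h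
          push_neg at h
          exact le_of_lt (h (mem_sdiff.1 hb).1))
      simpa [nsmul_eq_mul] using this
    have hcards : ((B \ B').card : ℝ) = N - B'.card := by
      rw [card_sdiff_of_subset (filter_subset _ _), hB]
      have : B'.card ≤ N := by rw [← hB]; exact card_le_card (filter_subset _ _)
      rw [Nat.cast_sub this]
    have hΓB : (1 - δ) * (N:ℝ)^2 ≤ B'.card * N + (N - B'.card) * ((1 - s) * N) := by
      calc (1 - δ) * (N:ℝ)^2 ≤ Γ.card := hΓcard
        _ = ∑ b ∈ B, (degB b : ℝ) := sumB.symm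
        _ = ∑ b ∈ B', (degB b : ℝ) + ∑ b ∈ B \ B', (degB b : ℝ) := hsplit
        _ ≤ B'.card * N + (N - B'.card) * ((1 - s) * N) := by
            rw [← hcards]; exact add_le_add h1 h2
    nlinarith [hΓB, hss, hs0, hNR, mul_pos hs0 hNR]
  refine ⟨A', filter_subset _ _, B', filter_subset _ _, cardA', cardB', ?_⟩
  -- key sumset bound
  set S := Γ.image fun p => p.1 + p.2 with hS
  have hΓmiss : (((A ×ˢ B) \ Γ).card : ℝ) ≤ δ * N^2 := by
    rw [card_sdiff_of_subset hΓAB, card_product, hA, hB]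
    push_cast [Nat.cast_sub (card_le_card hΓAB |>.trans_eq (by rw [card_product, hA, hB]))]
    · nlinarith [hΓcard]
  have cardS : (S.card : ℝ) ≤ K * N := hsum
  set f : G × G × G → G := fun p => p.1 + p.2.1 - p.2.2 with hf
  have key : ∀ σ ∈ A' + B',
      (1 - 2*s) * (N:ℝ)^2 ≤ (((S ×ˢ S ×ˢ S).filter fun p => f p = σ).card : ℝ) := by
    intro σ hσ
    obtain ⟨a', ha', b', hb', hab⟩ := mem_add.1 hσ
    rw [hA', mem_filter] at ha'
    rw [hB', mem_filter] at hb'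
    set Ba := B.filter (fun b => (a', b) ∈ Γ) with hBa
    set Ab := A.filter (fun a => (a, b') ∈ Γ) with hAb
    have hBacard : (1 - s) * N ≤ (Ba.card : ℝ) := ha'.2
    have hAbcard : (1 - s) * N ≤ (Ab.card : ℝ) := hb'.2
    set P := (Ab ×ˢ Ba).filter (fun q => q ∈ Γ) with hP
    have hPcard : (1 - 2*s) * (N:ℝ)^2 ≤ (P.card : ℝ) := by
      have hsub : (Ab ×ˢ Ba) \ Γ ⊆ (A ×ˢ B) \ Γ :=
        sdiff_subset_sdiff (product_subset_product (filter_subset _ _) (filter_subset _ _))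
          le_rfl
      have h1 : (((Ab ×ˢ Ba) \ Γ).card : ℝ) ≤ δ * N^2 :=
        le_trans (by exact_mod_cast card_le_card hsub) hΓmiss
      have h4 : ((Ab ×ˢ Ba).card : ℝ) ≤ (P.card : ℝ) + (((Ab ×ˢ Ba) \ Γ).card : ℝ) := by
        have hsub2 : Ab ×ˢ Ba ⊆ P ∪ ((Ab ×ˢ Ba) \ Γ) := by
          intro q hq
          by_cases h : q ∈ Γ
          · exact mem_union_left _ (mem_filter.2 ⟨hq, h⟩)
          · exact mem_union_right _ (mem_sdiff.2 ⟨hq, h⟩)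
        have := (card_le_card hsub2).trans (card_union_le _ _)
        exact_mod_cast this
      have hprodcard : ((Ab ×ˢ Ba).card : ℝ) = (Ab.card : ℝ) * (Ba.card : ℝ) := by
        rw [card_product]; push_cast; ring
      have hmul : ((1 - s) * N) * ((1 - s) * N) ≤ (Ab.card : ℝ) * (Ba.card : ℝ) :=
        mul_le_mul hAbcard hBacard (mul_nonneg (by linarith : (0:ℝ) ≤ 1 - s) (Nat.cast_nonneg N)) (Nat.cast_nonneg _)
      nlinarith [hss, hs0, hNR, h1, h4, hprodcard, hmul]
    have hinj : (P.card : ℝ) ≤ (((S ×ˢ S ×ˢ S).filter fun p => f p = σ).card : ℝ) := by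
      have := Finset.card_le_card_of_injOn
        (f := fun q : G × G => (a' + q.2, q.1 + b', q.1 + q.2))
        (s := P) (t := (S ×ˢ S ×ˢ S).filter fun p => f p = σ)
        (by
          intro q hq
          rw [hP, mem_coe, mem_filter, mem_product, hAb, hBa, mem_filter, mem_filter] at hq
          obtain ⟨⟨⟨_, hq1⟩, _, hq2⟩, hq3⟩ := hq
          refine mem_filter.2 ⟨mem_product.2 ⟨?_, mem_product.2 ⟨?_, ?_⟩⟩, ?_⟩
          · exact mem_image.2 ⟨(a', q.2), hq2, rfl⟩
          · exact mem_image.2 ⟨(q.1, b'), hq1, rfl⟩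
          · exact mem_image.2 ⟨q, hq3, rfl⟩
          · show a' + q.2 + (q.1 + b') - (q.1 + q.2) = σ
            rw [← hab]; abel)
        (by
          intro q _ r _ h
          have h1 : a' + q.2 = a' + r.2 := congrArg Prod.fst h
          have h2 : q.1 + b' = r.1 + b' := congrArg (fun x => x.2.1) h
          exact Prod.ext (add_right_cancel h2) (add_left_cancel h1))
      exact_mod_cast this
    linarith
  -- sum over fibers
  set T := (S ×ˢ S ×ˢ S).filter (fun p => f p ∈ A' + B') with hT
  have hTsum : T.card = ∑ σ ∈ A' + B', (T.filter fun p => f p = σ).card :=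
    card_eq_sum_card_fiberwise (fun p hp => (mem_filter.1 hp).2)
  have hfib : ∀ σ ∈ A' + B',
      (T.filter fun p => f p = σ) = ((S ×ˢ S ×ˢ S).filter fun p => f p = σ) := by
    intro σ hσ
    rw [hT, filter_filter]
    refine filter_congr fun p _ => ?_
    constructor
    · rintro ⟨_, h⟩; exact h
    · intro h; exact ⟨h ▸ hσ, h⟩
  have hcube : ((S ×ˢ S ×ˢ S).card : ℝ) ≤ (K * N)^3 := by
    rw [card_product, card_product]
    push_cast
    calc (S.card : ℝ) * ((S.card : ℝ) * (S.card : ℝ)) = (S.card : ℝ)^3 := by ring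
      _ ≤ (K * N)^3 := pow_le_pow_left₀ (Nat.cast_nonneg _) cardS 3
  have main : ((A' + B').card : ℝ) * ((1 - 2*s) * (N:ℝ)^2) ≤ (K * N)^3 := by
    calc ((A' + B').card : ℝ) * ((1 - 2*s) * (N:ℝ)^2)
        = ∑ _σ ∈ A' + B', ((1 - 2*s) * (N:ℝ)^2) := by
          rw [Finset.sum_const, nsmul_eq_mul]
      _ ≤ ∑ σ ∈ A' + B', ((T.filter fun p => f p = σ).card : ℝ) := by
          refine Finset.sum_le_sum fun σ hσ => ?_
          rw [hfib σ hσ]; exact key σ hσ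
      _ = (T.card : ℝ) := by rw [hTsum]; push_cast; ring
      _ ≤ ((S ×ˢ S ×ˢ S).card : ℝ) := by
          exact_mod_cast card_le_card (filter_subset _ _)
      _ ≤ (K * N)^3 := hcube
  have h12 : 0 < 1 - 2*s := by linarith
  rw [le_div_iff₀ (by positivity)]
  have hXnn : (0:ℝ) ≤ ((A' + B').card : ℝ) := Nat.cast_nonneg _
  have hXN : ((A' + B').card : ℝ) * (1 - 2*s) ≤ K^3 * N := by
    have h' : (((A' + B').card : ℝ) * (1 - 2*s)) * (N:ℝ)^2 ≤ (K^3 * N) * (N:ℝ)^2 := by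
      nlinarith [main]
    exact le_of_mul_le_mul_right h' (by positivity)
  nlinarith [hXN, mul_nonneg (mul_nonneg hXnn h12.le) hs0.le]
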